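/- Alternative contraction lemma (Karrenbauer): let δ ≤ 1/6, μ > 0, μ′ = (1 − δ/√n)μ, x, s > 0 componentwise, and suppose σ := (∑ᵢ(xᵢsᵢ/μ − 1)²)^{1/2} ≤ δ. If h, f satisfy xᵢfᵢ + sᵢhᵢ = μ′ − xᵢsᵢ for all i and hᵀf = 0, then σ′ := (∑ᵢ((xᵢ+hᵢ)(sᵢ+fᵢ)/μ′ − 1)²)^{1/2} ≤ δ. -/

import Mathlib

set_option maxHeartbeats 1000000

theorem karrenbauer_contraction {n : ℕ} (hn : 1 ≤ n)
    (x s h f : Fin n → ℝ) (μ δ : ℝ)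
    (hx : ∀ i, 0 < x i) (hs : ∀ i, 0 < s i) (hμ : 0 < μ)
    (hδ0 : 0 < δ) (hδ : δ ≤ 1 / 6)
    (hσ : Real.sqrt (∑ i, (x i * s i / μ - 1) ^ 2) ≤ δ)
    (hstep : ∀ i, x i * f i + s i * h i =
      (1 - δ / Real.sqrt n) * μ - x i * s i)
    (horth : ∑ i, h i * f i = 0) :
    Real.sqrt (∑ i,
      ((x i + h i) * (s i + f i) / ((1 - δ / Real.sqrt n) * μ) - 1) ^ 2) ≤ δ := by
  have hn' : (1:ℝ) ≤ (n:ℝ) := by exact_mod_cast hn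
  have hsn : 1 ≤ Real.sqrt n := by
    rw [show (1:ℝ) = Real.sqrt 1 by simp]
    exact Real.sqrt_le_sqrt hn'
  have hsn0 : 0 < Real.sqrt n := lt_of_lt_of_le one_pos hsn
  set t := δ / Real.sqrt n with ht
  have ht0 : 0 < t := div_pos hδ0 hsn0
  have htδ : t ≤ δ := div_le_self hδ0.le hsn
  have hn0 : (0:ℝ) < (n:ℝ) := by linarith
  have ht2 : (n:ℝ) * t^2 = δ^2 := by
    rw [ht, div_pow, Real.sq_sqrt hn0.le]
    field_simp
  have hμ'pos : 0 < (1 - t) * μ := mul_pos (by linarith) hμ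
  have hS0 : 0 ≤ ∑ i, (x i * s i / μ - 1)^2 :=
    Finset.sum_nonneg fun i _ => sq_nonneg _
  have hsum : ∑ i, (x i * s i / μ - 1)^2 ≤ δ^2 := by
    nlinarith [Real.sq_sqrt hS0, Real.sqrt_nonneg (∑ i, (x i * s i / μ - 1)^2)]
  have hei : ∀ i, (x i * s i / μ - 1)^2 ≤ δ^2 := fun i =>
    le_trans (Finset.single_le_sum (f := fun j => (x j * s j / μ - 1)^2)
      (fun j _ => sq_nonneg _) (Finset.mem_univ i)) hsum
  have hxs : ∀ i, (1 - δ) * μ ≤ x i * s i := by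
    intro i
    have h1 := hei i
    have h2 : -δ ≤ x i * s i / μ - 1 := by nlinarith
    have h3 : (1 - δ) ≤ x i * s i / μ := by linarith
    calc (1 - δ) * μ ≤ (x i * s i / μ) * μ := mul_le_mul_of_nonneg_right h3 hμ.le
      _ = x i * s i := by field_simp
  -- rewrite goal terms
  have hterm : ∀ i, (x i + h i) * (s i + f i) / ((1 - t) * μ) - 1
      = h i * f i / ((1 - t) * μ) := by
    intro i
    have hst := hstep i
    rw [div_sub_one hμ'pos.ne', div_left_inj' hμ'pos.ne']
    linear_combination hst
  rw [Finset.sum_congr rfl (fun i _ => by rw [hterm i])]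
  -- per-coordinate bound on max (h i * f i) 0
  have hmax : ∀ i, max (h i * f i) 0 ≤ μ * (x i * s i / μ - 1 + t)^2 / (4 * (1 - δ)) := by
    intro i
    have hxi := hx i; have hsi := hs i
    have hxsμ := hxs i
    have hxs0 : 0 < x i * s i := mul_pos hxi hsi
    have hmax0 : 0 ≤ max (h i * f i) 0 := le_max_right _ _
    have idA : μ * (x i * s i / μ - 1 + t) = x i * s i - (1 - t) * μ := by
      field_simp
      ring
    have idB : μ^2 * (x i * s i / μ - 1 + t)^2 = (x i * s i - (1 - t) * μ)^2 := by
      calc μ^2 * (x i * s i / μ - 1 + t)^2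
          = (μ * (x i * s i / μ - 1 + t))^2 := by ring
        _ = _ := by rw [idA]
    have hst : (1 - t) * μ - x i * s i = x i * f i + s i * h i := (hstep i).symm
    have A : 4 * (x i * s i) * max (h i * f i) 0 ≤ μ^2 * (x i * s i / μ - 1 + t)^2 := by
      rcases max_cases (h i * f i) 0 with ⟨he, _⟩ | ⟨he, _⟩
      · rw [he, idB, show x i * s i - (1 - t) * μ = -(x i * f i + s i * h i) by linarith]
        nlinarith [sq_nonneg (x i * f i - s i * h i)]
      · rw [he, idB]
        nlinarith [sq_nonneg (x i * s i - (1 - t) * μ)]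
    have c1 : 4 * ((1 - δ) * μ) * max (h i * f i) 0 ≤ μ^2 * (x i * s i / μ - 1 + t)^2 := by
      nlinarith [mul_nonneg (sub_nonneg.mpr hxsμ) hmax0]
    rw [le_div_iff₀ (by linarith : (0:ℝ) < 4 * (1 - δ))]
    nlinarith [c1, hμ]
  have hsumE : ∑ i, (x i * s i / μ - 1 + t)^2 ≤ 4 * δ^2 := by
    have h1 : ∀ i ∈ Finset.univ, (x i * s i / μ - 1 + t)^2
        ≤ 2 * (x i * s i / μ - 1)^2 + 2 * t^2 := fun i _ => by
      nlinarith [sq_nonneg (x i * s i / μ - 1 - t)]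
    calc ∑ i, (x i * s i / μ - 1 + t)^2
        ≤ ∑ i, (2 * (x i * s i / μ - 1)^2 + 2 * t^2) := Finset.sum_le_sum h1
      _ = 2 * (∑ i, (x i * s i / μ - 1)^2) + (n:ℝ) * (2 * t^2) := by
          rw [Finset.sum_add_distrib, Finset.sum_const, ← Finset.mul_sum]
          simp [Finset.card_univ]
      _ ≤ 2 * δ^2 + 2 * ((n:ℝ) * t^2) := by linarith [hsum]
      _ = 4 * δ^2 := by rw [ht2]; ring
  have habs : ∀ i, |h i * f i| = 2 * max (h i * f i) 0 - h i * f i := by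
    intro i
    rcases le_or_gt 0 (h i * f i) with hc | hc
    · rw [abs_of_nonneg hc, max_eq_left hc]; ring
    · rw [abs_of_neg hc, max_eq_right hc.le]; ring
  have hA : ∑ i, |h i * f i| ≤ 2 * δ^2 * μ / (1 - δ) := by
    have e1 : ∑ i, |h i * f i| = 2 * ∑ i, max (h i * f i) 0 := by
      rw [Finset.sum_congr rfl (fun i _ => habs i), Finset.sum_sub_distrib, horth,
        ← Finset.mul_sum]
      ring
    have e2 : ∑ i, max (h i * f i) 0 ≤ ∑ i, μ * (x i * s i / μ - 1 + t)^2 / (4 * (1 - δ)) :=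
      Finset.sum_le_sum fun i _ => hmax i
    have e3 : ∑ i, μ * (x i * s i / μ - 1 + t)^2 / (4 * (1 - δ))
        = (μ / (4 * (1 - δ))) * ∑ i, (x i * s i / μ - 1 + t)^2 := by
      rw [Finset.mul_sum]
      exact Finset.sum_congr rfl fun i _ => by ring
    have e4 : (μ / (4 * (1 - δ))) * ∑ i, (x i * s i / μ - 1 + t)^2
        ≤ (μ / (4 * (1 - δ))) * (4 * δ^2) :=
      mul_le_mul_of_nonneg_left hsumE (div_nonneg hμ.le (by linarith))
    have e5 : (μ / (4 * (1 - δ))) * (4 * δ^2) = δ^2 * μ / (1 - δ) := by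
      rw [div_mul_eq_mul_div, div_eq_div_iff (by intro hc; nlinarith : (4:ℝ) * (1 - δ) ≠ 0) (by intro hc; nlinarith : (1:ℝ) - δ ≠ 0)]
      ring
    have e6 : 2 * δ^2 * μ / (1 - δ) = 2 * (δ^2 * μ / (1 - δ)) := by ring
    rw [e1, e6]
    linarith [e2, e3.le, e4, e5.le]
  -- finish
  have habs2 : ∀ i ∈ Finset.univ, (h i * f i / ((1 - t) * μ))^2
      = (|h i * f i| / ((1 - t) * μ))^2 := fun i _ => by
    rw [div_pow, div_pow, sq_abs]
  have hfin : Real.sqrt (∑ i, (h i * f i / ((1 - t) * μ))^2)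
      ≤ ∑ i, |h i * f i| / ((1 - t) * μ) := by
    rw [Finset.sum_congr rfl habs2]
    have h1 : ∑ i, (|h i * f i| / ((1 - t) * μ))^2
        ≤ (∑ i, |h i * f i| / ((1 - t) * μ))^2 :=
      Finset.sum_sq_le_sq_sum_of_nonneg (fun i _ => by positivity)
    calc Real.sqrt (∑ i, (|h i * f i| / ((1 - t) * μ))^2)
        ≤ Real.sqrt ((∑ i, |h i * f i| / ((1 - t) * μ))^2) := Real.sqrt_le_sqrt h1
      _ = _ := Real.sqrt_sq (Finset.sum_nonneg fun i _ => by positivity)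
  refine hfin.trans ?_
  rw [← Finset.sum_div, div_le_iff₀ hμ'pos]
  have key : 2 * δ^2 * μ / (1 - δ) ≤ δ * ((1 - t) * μ) := by
    rw [div_le_iff₀ (by linarith : (0:ℝ) < 1 - δ)]
    have k : δ * ((1 - δ) * μ) * (1 - δ) ≤ δ * ((1 - t) * μ) * (1 - δ) := by
      apply mul_le_mul_of_nonneg_right _ (by linarith)
      apply mul_le_mul_of_nonneg_left _ hδ0.le
      exact mul_le_mul_of_nonneg_right (by linarith) hμ.le
    nlinarith [k, mul_pos hδ0 hμ]
  linarith [hA]
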